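/- arXiv:2212.00559 — 5 statements merged into one kernel-verified Lean document; each statement's English description precedes it below -/
import Mathlib

section
/- Let V be a real inner product space of finite dimension n ≥ 4, and let W be an algebraic Weyl tensor on V, i.e. a (0,4)-tensor with the symmetries of a curvature tensor (antisymmetry in the first and last pairs, pair-interchange symmetry, first Bianchi identity) that is totally trace-free. If there exists a nonzero vector v ∈ V with W(x,y,v,z) = 0 for all x,y,z ∈ V, and n = 4, then W = 0. -/
open RealInnerProductSpace

set_option maxHeartbeats 1600000 in
/-- Eardley et al.: in dimension 4, an algebraic Weyl tensor annihilating a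
nonzero vector vanishes identically. -/
theorem stmt0 {V : Type*} [NormedAddCommGroup V] [InnerProductSpace ℝ V]
    [FiniteDimensional ℝ V] (hdim : Module.finrank ℝ V = 4)
    (W : V →ₗ[ℝ] V →ₗ[ℝ] V →ₗ[ℝ] V →ₗ[ℝ] ℝ)
    (hanti1 : ∀ x y z w : V, W x y z w = - W y x z w)
    (hanti2 : ∀ x y z w : V, W x y z w = - W x y w z)
    (hpair : ∀ x y z w : V, W x y z w = W z w x y)
    (hbianchi : ∀ x y z w : V, W x y z w + W y z x w + W z x y w = 0)
    (htracefree : ∀ (b : OrthonormalBasis (Fin 4) ℝ V) (x y : V),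
      ∑ i, W (b i) x y (b i) = 0)
    (v : V) (hv : v ≠ 0) (hWv : ∀ x y z : V, W x y v z = 0) :
    W = 0 := by
  -- Build an orthonormal basis whose last vector is the normalization of `v`.
  obtain ⟨b, hb3⟩ : ∃ b : OrthonormalBasis (Fin 4) ℝ V, b 3 = ‖v‖⁻¹ • v := by
    have hcard : Module.finrank ℝ V = Fintype.card (Fin 4) := by simpa using hdim
    have hnorm : ‖(‖v‖⁻¹ • v : V)‖ = 1 := by
      rw [norm_smul, norm_inv, norm_norm]
      exact inv_mul_cancel₀ (norm_ne_zero_iff.mpr hv)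
    have horth : Orthonormal ℝ
        (({3} : Set (Fin 4)).restrict (fun _ => ‖v‖⁻¹ • v : Fin 4 → V)) := by
      constructor
      · intro i; exact hnorm
      · intro i j hij
        exact absurd (Subtype.ext (by simpa using i.2.trans j.2.symm)) hij
    obtain ⟨b, hb⟩ := horth.exists_orthonormalBasis_extension_of_card_eq hcard
    exact ⟨b, hb 3 rfl⟩
  -- Vanishing whenever an argument is `b 3`.
  have h3c : ∀ x y w : V, W x y (b 3) w = 0 := by
    intro x y w
    rw [hb3, map_smul]
    simp [hWv]
  have h3a : ∀ y z w : V, W (b 3) y z w = 0 := by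
    intro y z w; rw [hpair]; exact h3c _ _ _
  have h3b : ∀ x z w : V, W x (b 3) z w = 0 := by
    intro x z w; rw [hanti1, h3a, neg_zero]
  have h3d : ∀ x y z : V, W x y z (b 3) = 0 := by
    intro x y z; rw [hanti2, h3c, neg_zero]
  -- Vanishing on repeated arguments.
  have hr1 : ∀ x z w : V, W x x z w = 0 := by
    intro x z w; have := hanti1 x x z w; linarith
  have hr2 : ∀ x y z : V, W x y z z = 0 := by
    intro x y z; have := hanti2 x y z z; linarith
  -- Reduced trace identity.
  have tr : ∀ x y : V, W (b 0) x y (b 0) + W (b 1) x y (b 1) + W (b 2) x y (b 2) = 0 := by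
    intro x y
    have h := htracefree b x y
    rw [Fin.sum_univ_four] at h
    have h4 := h3a x y (b 3)
    linarith
  -- The six canonical components all vanish.
  have cA : W (b 0) (b 1) (b 0) (b 1) = 0 := by
    linarith [tr (b 0) (b 0), tr (b 1) (b 1), tr (b 2) (b 2),
      hr1 (b 0) (b 0) (b 0), hr1 (b 1) (b 1) (b 1), hr1 (b 2) (b 2) (b 2),
      hanti1 (b 1) (b 0) (b 0) (b 1), hanti1 (b 2) (b 0) (b 0) (b 2),
      hanti2 (b 0) (b 1) (b 1) (b 0), hanti1 (b 2) (b 1) (b 1) (b 2),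
      hanti2 (b 0) (b 2) (b 2) (b 0), hanti2 (b 1) (b 2) (b 2) (b 1),
      hanti1 (b 2) (b 1) (b 1) (b 2), hpair (b 1) (b 2) (b 1) (b 2)]
  have cB : W (b 0) (b 2) (b 0) (b 2) = 0 := by
    linarith [tr (b 0) (b 0), tr (b 1) (b 1), tr (b 2) (b 2),
      hr1 (b 0) (b 0) (b 0), hr1 (b 1) (b 1) (b 1), hr1 (b 2) (b 2) (b 2),
      hanti1 (b 1) (b 0) (b 0) (b 1), hanti1 (b 2) (b 0) (b 0) (b 2),
      hanti2 (b 0) (b 1) (b 1) (b 0), hanti1 (b 2) (b 1) (b 1) (b 2),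
      hanti2 (b 0) (b 2) (b 2) (b 0), hanti2 (b 1) (b 2) (b 2) (b 1)]
  have cC : W (b 1) (b 2) (b 1) (b 2) = 0 := by
    linarith [tr (b 0) (b 0), tr (b 1) (b 1), tr (b 2) (b 2),
      hr1 (b 0) (b 0) (b 0), hr1 (b 1) (b 1) (b 1), hr1 (b 2) (b 2) (b 2),
      hanti1 (b 1) (b 0) (b 0) (b 1), hanti1 (b 2) (b 0) (b 0) (b 2),
      hanti2 (b 0) (b 1) (b 1) (b 0), hanti1 (b 2) (b 1) (b 1) (b 2),
      hanti2 (b 0) (b 2) (b 2) (b 0), hanti2 (b 1) (b 2) (b 2) (b 1)]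
  have cF : W (b 0) (b 2) (b 1) (b 2) = 0 := by
    linarith [tr (b 0) (b 1), hr1 (b 0) (b 1) (b 0), hr2 (b 1) (b 0) (b 1),
      hanti1 (b 2) (b 0) (b 1) (b 2)]
  have cE : W (b 0) (b 1) (b 1) (b 2) = 0 := by
    linarith [tr (b 0) (b 2), hr1 (b 0) (b 2) (b 0), hr2 (b 2) (b 0) (b 2),
      hanti1 (b 1) (b 0) (b 2) (b 1), hanti2 (b 0) (b 1) (b 2) (b 1)]
  have cD : W (b 0) (b 1) (b 0) (b 2) = 0 := by
    linarith [tr (b 1) (b 2), hr1 (b 1) (b 2) (b 1), hr2 (b 2) (b 1) (b 2),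
      hanti2 (b 0) (b 1) (b 2) (b 0)]
  -- All components vanish.
  have key : ∀ i j k l : Fin 4, W (b i) (b j) (b k) (b l) = 0 := fun i j k l =>
    match i, j, k, l with
    | 0, 0, 0, 0 => hr1 (b 0) (b 0) (b 0)
    | 0, 0, 0, 1 => hr1 (b 0) (b 0) (b 1)
    | 0, 0, 0, 2 => hr1 (b 0) (b 0) (b 2)
    | 0, 0, 0, 3 => h3d (b 0) (b 0) (b 0)
    | 0, 0, 1, 0 => hr1 (b 0) (b 1) (b 0)
    | 0, 0, 1, 1 => hr1 (b 0) (b 1) (b 1)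
    | 0, 0, 1, 2 => hr1 (b 0) (b 1) (b 2)
    | 0, 0, 1, 3 => h3d (b 0) (b 0) (b 1)
    | 0, 0, 2, 0 => hr1 (b 0) (b 2) (b 0)
    | 0, 0, 2, 1 => hr1 (b 0) (b 2) (b 1)
    | 0, 0, 2, 2 => hr1 (b 0) (b 2) (b 2)
    | 0, 0, 2, 3 => h3d (b 0) (b 0) (b 2)
    | 0, 0, 3, 0 => h3c (b 0) (b 0) (b 0)
    | 0, 0, 3, 1 => h3c (b 0) (b 0) (b 1)
    | 0, 0, 3, 2 => h3c (b 0) (b 0) (b 2)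
    | 0, 0, 3, 3 => h3c (b 0) (b 0) (b 3)
    | 0, 1, 0, 0 => hr2 (b 0) (b 1) (b 0)
    | 0, 1, 0, 1 => by linarith [cA]
    | 0, 1, 0, 2 => by linarith [cD]
    | 0, 1, 0, 3 => h3d (b 0) (b 1) (b 0)
    | 0, 1, 1, 0 => by linarith [hanti2 (b 0) (b 1) (b 1) (b 0), cA]
    | 0, 1, 1, 1 => hr2 (b 0) (b 1) (b 1)
    | 0, 1, 1, 2 => by linarith [cE]
    | 0, 1, 1, 3 => h3d (b 0) (b 1) (b 1)
    | 0, 1, 2, 0 => by linarith [hanti2 (b 0) (b 1) (b 2) (b 0), cD]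
    | 0, 1, 2, 1 => by linarith [hanti2 (b 0) (b 1) (b 2) (b 1), cE]
    | 0, 1, 2, 2 => hr2 (b 0) (b 1) (b 2)
    | 0, 1, 2, 3 => h3d (b 0) (b 1) (b 2)
    | 0, 1, 3, 0 => h3c (b 0) (b 1) (b 0)
    | 0, 1, 3, 1 => h3c (b 0) (b 1) (b 1)
    | 0, 1, 3, 2 => h3c (b 0) (b 1) (b 2)
    | 0, 1, 3, 3 => h3c (b 0) (b 1) (b 3)
    | 0, 2, 0, 0 => hr2 (b 0) (b 2) (b 0)
    | 0, 2, 0, 1 => by linarith [hpair (b 0) (b 2) (b 0) (b 1), cD]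
    | 0, 2, 0, 2 => by linarith [cB]
    | 0, 2, 0, 3 => h3d (b 0) (b 2) (b 0)
    | 0, 2, 1, 0 => by linarith [hanti2 (b 0) (b 2) (b 1) (b 0), hpair (b 0) (b 2) (b 0) (b 1), cD]
    | 0, 2, 1, 1 => hr2 (b 0) (b 2) (b 1)
    | 0, 2, 1, 2 => by linarith [cF]
    | 0, 2, 1, 3 => h3d (b 0) (b 2) (b 1)
    | 0, 2, 2, 0 => by linarith [hanti2 (b 0) (b 2) (b 2) (b 0), cB]
    | 0, 2, 2, 1 => by linarith [hanti2 (b 0) (b 2) (b 2) (b 1), cF]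
    | 0, 2, 2, 2 => hr2 (b 0) (b 2) (b 2)
    | 0, 2, 2, 3 => h3d (b 0) (b 2) (b 2)
    | 0, 2, 3, 0 => h3c (b 0) (b 2) (b 0)
    | 0, 2, 3, 1 => h3c (b 0) (b 2) (b 1)
    | 0, 2, 3, 2 => h3c (b 0) (b 2) (b 2)
    | 0, 2, 3, 3 => h3c (b 0) (b 2) (b 3)
    | 0, 3, 0, 0 => h3b (b 0) (b 0) (b 0)
    | 0, 3, 0, 1 => h3b (b 0) (b 0) (b 1)
    | 0, 3, 0, 2 => h3b (b 0) (b 0) (b 2)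
    | 0, 3, 0, 3 => h3b (b 0) (b 0) (b 3)
    | 0, 3, 1, 0 => h3b (b 0) (b 1) (b 0)
    | 0, 3, 1, 1 => h3b (b 0) (b 1) (b 1)
    | 0, 3, 1, 2 => h3b (b 0) (b 1) (b 2)
    | 0, 3, 1, 3 => h3b (b 0) (b 1) (b 3)
    | 0, 3, 2, 0 => h3b (b 0) (b 2) (b 0)
    | 0, 3, 2, 1 => h3b (b 0) (b 2) (b 1)
    | 0, 3, 2, 2 => h3b (b 0) (b 2) (b 2)
    | 0, 3, 2, 3 => h3b (b 0) (b 2) (b 3)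
    | 0, 3, 3, 0 => h3b (b 0) (b 3) (b 0)
    | 0, 3, 3, 1 => h3b (b 0) (b 3) (b 1)
    | 0, 3, 3, 2 => h3b (b 0) (b 3) (b 2)
    | 0, 3, 3, 3 => h3b (b 0) (b 3) (b 3)
    | 1, 0, 0, 0 => hr2 (b 1) (b 0) (b 0)
    | 1, 0, 0, 1 => by linarith [hanti1 (b 1) (b 0) (b 0) (b 1), cA]
    | 1, 0, 0, 2 => by linarith [hanti1 (b 1) (b 0) (b 0) (b 2), cD]
    | 1, 0, 0, 3 => h3d (b 1) (b 0) (b 0)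
    | 1, 0, 1, 0 => by linarith [hanti1 (b 1) (b 0) (b 1) (b 0), hanti2 (b 0) (b 1) (b 1) (b 0), cA]
    | 1, 0, 1, 1 => hr2 (b 1) (b 0) (b 1)
    | 1, 0, 1, 2 => by linarith [hanti1 (b 1) (b 0) (b 1) (b 2), cE]
    | 1, 0, 1, 3 => h3d (b 1) (b 0) (b 1)
    | 1, 0, 2, 0 => by linarith [hanti1 (b 1) (b 0) (b 2) (b 0), hanti2 (b 0) (b 1) (b 2) (b 0), cD]
    | 1, 0, 2, 1 => by linarith [hanti1 (b 1) (b 0) (b 2) (b 1), hanti2 (b 0) (b 1) (b 2) (b 1), cE]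
    | 1, 0, 2, 2 => hr2 (b 1) (b 0) (b 2)
    | 1, 0, 2, 3 => h3d (b 1) (b 0) (b 2)
    | 1, 0, 3, 0 => h3c (b 1) (b 0) (b 0)
    | 1, 0, 3, 1 => h3c (b 1) (b 0) (b 1)
    | 1, 0, 3, 2 => h3c (b 1) (b 0) (b 2)
    | 1, 0, 3, 3 => h3c (b 1) (b 0) (b 3)
    | 1, 1, 0, 0 => hr1 (b 1) (b 0) (b 0)
    | 1, 1, 0, 1 => hr1 (b 1) (b 0) (b 1)
    | 1, 1, 0, 2 => hr1 (b 1) (b 0) (b 2)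
    | 1, 1, 0, 3 => h3d (b 1) (b 1) (b 0)
    | 1, 1, 1, 0 => hr1 (b 1) (b 1) (b 0)
    | 1, 1, 1, 1 => hr1 (b 1) (b 1) (b 1)
    | 1, 1, 1, 2 => hr1 (b 1) (b 1) (b 2)
    | 1, 1, 1, 3 => h3d (b 1) (b 1) (b 1)
    | 1, 1, 2, 0 => hr1 (b 1) (b 2) (b 0)
    | 1, 1, 2, 1 => hr1 (b 1) (b 2) (b 1)
    | 1, 1, 2, 2 => hr1 (b 1) (b 2) (b 2)
    | 1, 1, 2, 3 => h3d (b 1) (b 1) (b 2)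
    | 1, 1, 3, 0 => h3c (b 1) (b 1) (b 0)
    | 1, 1, 3, 1 => h3c (b 1) (b 1) (b 1)
    | 1, 1, 3, 2 => h3c (b 1) (b 1) (b 2)
    | 1, 1, 3, 3 => h3c (b 1) (b 1) (b 3)
    | 1, 2, 0, 0 => hr2 (b 1) (b 2) (b 0)
    | 1, 2, 0, 1 => by linarith [hpair (b 1) (b 2) (b 0) (b 1), cE]
    | 1, 2, 0, 2 => by linarith [hpair (b 1) (b 2) (b 0) (b 2), cF]
    | 1, 2, 0, 3 => h3d (b 1) (b 2) (b 0)
    | 1, 2, 1, 0 => by linarith [hanti2 (b 1) (b 2) (b 1) (b 0), hpair (b 1) (b 2) (b 0) (b 1), cE]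
    | 1, 2, 1, 1 => hr2 (b 1) (b 2) (b 1)
    | 1, 2, 1, 2 => by linarith [cC]
    | 1, 2, 1, 3 => h3d (b 1) (b 2) (b 1)
    | 1, 2, 2, 0 => by linarith [hanti2 (b 1) (b 2) (b 2) (b 0), hpair (b 1) (b 2) (b 0) (b 2), cF]
    | 1, 2, 2, 1 => by linarith [hanti2 (b 1) (b 2) (b 2) (b 1), cC]
    | 1, 2, 2, 2 => hr2 (b 1) (b 2) (b 2)
    | 1, 2, 2, 3 => h3d (b 1) (b 2) (b 2)
    | 1, 2, 3, 0 => h3c (b 1) (b 2) (b 0)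
    | 1, 2, 3, 1 => h3c (b 1) (b 2) (b 1)
    | 1, 2, 3, 2 => h3c (b 1) (b 2) (b 2)
    | 1, 2, 3, 3 => h3c (b 1) (b 2) (b 3)
    | 1, 3, 0, 0 => h3b (b 1) (b 0) (b 0)
    | 1, 3, 0, 1 => h3b (b 1) (b 0) (b 1)
    | 1, 3, 0, 2 => h3b (b 1) (b 0) (b 2)
    | 1, 3, 0, 3 => h3b (b 1) (b 0) (b 3)
    | 1, 3, 1, 0 => h3b (b 1) (b 1) (b 0)
    | 1, 3, 1, 1 => h3b (b 1) (b 1) (b 1)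
    | 1, 3, 1, 2 => h3b (b 1) (b 1) (b 2)
    | 1, 3, 1, 3 => h3b (b 1) (b 1) (b 3)
    | 1, 3, 2, 0 => h3b (b 1) (b 2) (b 0)
    | 1, 3, 2, 1 => h3b (b 1) (b 2) (b 1)
    | 1, 3, 2, 2 => h3b (b 1) (b 2) (b 2)
    | 1, 3, 2, 3 => h3b (b 1) (b 2) (b 3)
    | 1, 3, 3, 0 => h3b (b 1) (b 3) (b 0)
    | 1, 3, 3, 1 => h3b (b 1) (b 3) (b 1)
    | 1, 3, 3, 2 => h3b (b 1) (b 3) (b 2)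
    | 1, 3, 3, 3 => h3b (b 1) (b 3) (b 3)
    | 2, 0, 0, 0 => hr2 (b 2) (b 0) (b 0)
    | 2, 0, 0, 1 => by linarith [hanti1 (b 2) (b 0) (b 0) (b 1), hpair (b 0) (b 2) (b 0) (b 1), cD]
    | 2, 0, 0, 2 => by linarith [hanti1 (b 2) (b 0) (b 0) (b 2), cB]
    | 2, 0, 0, 3 => h3d (b 2) (b 0) (b 0)
    | 2, 0, 1, 0 => by linarith [hanti1 (b 2) (b 0) (b 1) (b 0), hanti2 (b 0) (b 2) (b 1) (b 0), hpair (b 0) (b 2) (b 0) (b 1), cD]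
    | 2, 0, 1, 1 => hr2 (b 2) (b 0) (b 1)
    | 2, 0, 1, 2 => by linarith [hanti1 (b 2) (b 0) (b 1) (b 2), cF]
    | 2, 0, 1, 3 => h3d (b 2) (b 0) (b 1)
    | 2, 0, 2, 0 => by linarith [hanti1 (b 2) (b 0) (b 2) (b 0), hanti2 (b 0) (b 2) (b 2) (b 0), cB]
    | 2, 0, 2, 1 => by linarith [hanti1 (b 2) (b 0) (b 2) (b 1), hanti2 (b 0) (b 2) (b 2) (b 1), cF]
    | 2, 0, 2, 2 => hr2 (b 2) (b 0) (b 2)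
    | 2, 0, 2, 3 => h3d (b 2) (b 0) (b 2)
    | 2, 0, 3, 0 => h3c (b 2) (b 0) (b 0)
    | 2, 0, 3, 1 => h3c (b 2) (b 0) (b 1)
    | 2, 0, 3, 2 => h3c (b 2) (b 0) (b 2)
    | 2, 0, 3, 3 => h3c (b 2) (b 0) (b 3)
    | 2, 1, 0, 0 => hr2 (b 2) (b 1) (b 0)
    | 2, 1, 0, 1 => by linarith [hanti1 (b 2) (b 1) (b 0) (b 1), hpair (b 1) (b 2) (b 0) (b 1), cE]
    | 2, 1, 0, 2 => by linarith [hanti1 (b 2) (b 1) (b 0) (b 2), hpair (b 1) (b 2) (b 0) (b 2), cF]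
    | 2, 1, 0, 3 => h3d (b 2) (b 1) (b 0)
    | 2, 1, 1, 0 => by linarith [hanti1 (b 2) (b 1) (b 1) (b 0), hanti2 (b 1) (b 2) (b 1) (b 0), hpair (b 1) (b 2) (b 0) (b 1), cE]
    | 2, 1, 1, 1 => hr2 (b 2) (b 1) (b 1)
    | 2, 1, 1, 2 => by linarith [hanti1 (b 2) (b 1) (b 1) (b 2), cC]
    | 2, 1, 1, 3 => h3d (b 2) (b 1) (b 1)
    | 2, 1, 2, 0 => by linarith [hanti1 (b 2) (b 1) (b 2) (b 0), hanti2 (b 1) (b 2) (b 2) (b 0), hpair (b 1) (b 2) (b 0) (b 2), cF]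
    | 2, 1, 2, 1 => by linarith [hanti1 (b 2) (b 1) (b 2) (b 1), hanti2 (b 1) (b 2) (b 2) (b 1), cC]
    | 2, 1, 2, 2 => hr2 (b 2) (b 1) (b 2)
    | 2, 1, 2, 3 => h3d (b 2) (b 1) (b 2)
    | 2, 1, 3, 0 => h3c (b 2) (b 1) (b 0)
    | 2, 1, 3, 1 => h3c (b 2) (b 1) (b 1)
    | 2, 1, 3, 2 => h3c (b 2) (b 1) (b 2)
    | 2, 1, 3, 3 => h3c (b 2) (b 1) (b 3)
    | 2, 2, 0, 0 => hr1 (b 2) (b 0) (b 0)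
    | 2, 2, 0, 1 => hr1 (b 2) (b 0) (b 1)
    | 2, 2, 0, 2 => hr1 (b 2) (b 0) (b 2)
    | 2, 2, 0, 3 => h3d (b 2) (b 2) (b 0)
    | 2, 2, 1, 0 => hr1 (b 2) (b 1) (b 0)
    | 2, 2, 1, 1 => hr1 (b 2) (b 1) (b 1)
    | 2, 2, 1, 2 => hr1 (b 2) (b 1) (b 2)
    | 2, 2, 1, 3 => h3d (b 2) (b 2) (b 1)
    | 2, 2, 2, 0 => hr1 (b 2) (b 2) (b 0)
    | 2, 2, 2, 1 => hr1 (b 2) (b 2) (b 1)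
    | 2, 2, 2, 2 => hr1 (b 2) (b 2) (b 2)
    | 2, 2, 2, 3 => h3d (b 2) (b 2) (b 2)
    | 2, 2, 3, 0 => h3c (b 2) (b 2) (b 0)
    | 2, 2, 3, 1 => h3c (b 2) (b 2) (b 1)
    | 2, 2, 3, 2 => h3c (b 2) (b 2) (b 2)
    | 2, 2, 3, 3 => h3c (b 2) (b 2) (b 3)
    | 2, 3, 0, 0 => h3b (b 2) (b 0) (b 0)
    | 2, 3, 0, 1 => h3b (b 2) (b 0) (b 1)
    | 2, 3, 0, 2 => h3b (b 2) (b 0) (b 2)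
    | 2, 3, 0, 3 => h3b (b 2) (b 0) (b 3)
    | 2, 3, 1, 0 => h3b (b 2) (b 1) (b 0)
    | 2, 3, 1, 1 => h3b (b 2) (b 1) (b 1)
    | 2, 3, 1, 2 => h3b (b 2) (b 1) (b 2)
    | 2, 3, 1, 3 => h3b (b 2) (b 1) (b 3)
    | 2, 3, 2, 0 => h3b (b 2) (b 2) (b 0)
    | 2, 3, 2, 1 => h3b (b 2) (b 2) (b 1)
    | 2, 3, 2, 2 => h3b (b 2) (b 2) (b 2)
    | 2, 3, 2, 3 => h3b (b 2) (b 2) (b 3)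
    | 2, 3, 3, 0 => h3b (b 2) (b 3) (b 0)
    | 2, 3, 3, 1 => h3b (b 2) (b 3) (b 1)
    | 2, 3, 3, 2 => h3b (b 2) (b 3) (b 2)
    | 2, 3, 3, 3 => h3b (b 2) (b 3) (b 3)
    | 3, 0, 0, 0 => h3a (b 0) (b 0) (b 0)
    | 3, 0, 0, 1 => h3a (b 0) (b 0) (b 1)
    | 3, 0, 0, 2 => h3a (b 0) (b 0) (b 2)
    | 3, 0, 0, 3 => h3a (b 0) (b 0) (b 3)
    | 3, 0, 1, 0 => h3a (b 0) (b 1) (b 0)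
    | 3, 0, 1, 1 => h3a (b 0) (b 1) (b 1)
    | 3, 0, 1, 2 => h3a (b 0) (b 1) (b 2)
    | 3, 0, 1, 3 => h3a (b 0) (b 1) (b 3)
    | 3, 0, 2, 0 => h3a (b 0) (b 2) (b 0)
    | 3, 0, 2, 1 => h3a (b 0) (b 2) (b 1)
    | 3, 0, 2, 2 => h3a (b 0) (b 2) (b 2)
    | 3, 0, 2, 3 => h3a (b 0) (b 2) (b 3)
    | 3, 0, 3, 0 => h3a (b 0) (b 3) (b 0)
    | 3, 0, 3, 1 => h3a (b 0) (b 3) (b 1)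
    | 3, 0, 3, 2 => h3a (b 0) (b 3) (b 2)
    | 3, 0, 3, 3 => h3a (b 0) (b 3) (b 3)
    | 3, 1, 0, 0 => h3a (b 1) (b 0) (b 0)
    | 3, 1, 0, 1 => h3a (b 1) (b 0) (b 1)
    | 3, 1, 0, 2 => h3a (b 1) (b 0) (b 2)
    | 3, 1, 0, 3 => h3a (b 1) (b 0) (b 3)
    | 3, 1, 1, 0 => h3a (b 1) (b 1) (b 0)
    | 3, 1, 1, 1 => h3a (b 1) (b 1) (b 1)
    | 3, 1, 1, 2 => h3a (b 1) (b 1) (b 2)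
    | 3, 1, 1, 3 => h3a (b 1) (b 1) (b 3)
    | 3, 1, 2, 0 => h3a (b 1) (b 2) (b 0)
    | 3, 1, 2, 1 => h3a (b 1) (b 2) (b 1)
    | 3, 1, 2, 2 => h3a (b 1) (b 2) (b 2)
    | 3, 1, 2, 3 => h3a (b 1) (b 2) (b 3)
    | 3, 1, 3, 0 => h3a (b 1) (b 3) (b 0)
    | 3, 1, 3, 1 => h3a (b 1) (b 3) (b 1)
    | 3, 1, 3, 2 => h3a (b 1) (b 3) (b 2)
    | 3, 1, 3, 3 => h3a (b 1) (b 3) (b 3)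
    | 3, 2, 0, 0 => h3a (b 2) (b 0) (b 0)
    | 3, 2, 0, 1 => h3a (b 2) (b 0) (b 1)
    | 3, 2, 0, 2 => h3a (b 2) (b 0) (b 2)
    | 3, 2, 0, 3 => h3a (b 2) (b 0) (b 3)
    | 3, 2, 1, 0 => h3a (b 2) (b 1) (b 0)
    | 3, 2, 1, 1 => h3a (b 2) (b 1) (b 1)
    | 3, 2, 1, 2 => h3a (b 2) (b 1) (b 2)
    | 3, 2, 1, 3 => h3a (b 2) (b 1) (b 3)
    | 3, 2, 2, 0 => h3a (b 2) (b 2) (b 0)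
    | 3, 2, 2, 1 => h3a (b 2) (b 2) (b 1)
    | 3, 2, 2, 2 => h3a (b 2) (b 2) (b 2)
    | 3, 2, 2, 3 => h3a (b 2) (b 2) (b 3)
    | 3, 2, 3, 0 => h3a (b 2) (b 3) (b 0)
    | 3, 2, 3, 1 => h3a (b 2) (b 3) (b 1)
    | 3, 2, 3, 2 => h3a (b 2) (b 3) (b 2)
    | 3, 2, 3, 3 => h3a (b 2) (b 3) (b 3)
    | 3, 3, 0, 0 => h3a (b 3) (b 0) (b 0)
    | 3, 3, 0, 1 => h3a (b 3) (b 0) (b 1)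
    | 3, 3, 0, 2 => h3a (b 3) (b 0) (b 2)
    | 3, 3, 0, 3 => h3a (b 3) (b 0) (b 3)
    | 3, 3, 1, 0 => h3a (b 3) (b 1) (b 0)
    | 3, 3, 1, 1 => h3a (b 3) (b 1) (b 1)
    | 3, 3, 1, 2 => h3a (b 3) (b 1) (b 2)
    | 3, 3, 1, 3 => h3a (b 3) (b 1) (b 3)
    | 3, 3, 2, 0 => h3a (b 3) (b 2) (b 0)
    | 3, 3, 2, 1 => h3a (b 3) (b 2) (b 1)
    | 3, 3, 2, 2 => h3a (b 3) (b 2) (b 2)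
    | 3, 3, 2, 3 => h3a (b 3) (b 2) (b 3)
    | 3, 3, 3, 0 => h3a (b 3) (b 3) (b 0)
    | 3, 3, 3, 1 => h3a (b 3) (b 3) (b 1)
    | 3, 3, 3, 2 => h3a (b 3) (b 3) (b 2)
    | 3, 3, 3, 3 => h3a (b 3) (b 3) (b 3)
  refine b.toBasis.ext fun i => b.toBasis.ext fun j => b.toBasis.ext fun k =>
    b.toBasis.ext fun l => ?_
  simpa using key i j k l
end

section
/- With the setup of the previous computation (R an algebraic curvature tensor on (V,g), dim V = 2m+1 ≥ 5, R(X,ξ)ξ = X - η(X)ξ, Qξ = 2mξ, W defined by the standard formula): W(X,ξ)ξ = 0 for all X if and only if QX = (r/(2m) - 1)X + (2m + 1 - r/(2m)) η(X)ξ for all X, i.e. the Ricci tensor is η-Einstein. -/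
open RealInnerProductSpace

/-- Algebraic core of Proposition 1.1: W(X,ξ)ξ = 0 for all X iff the Ricci
operator is η-Einstein. -/
theorem stmt4 {V : Type*} [NormedAddCommGroup V] [InnerProductSpace ℝ V]
    [FiniteDimensional ℝ V] (m : ℕ) (hm : 2 ≤ m)
    (hdim : Module.finrank ℝ V = 2 * m + 1)
    (b : OrthonormalBasis (Fin (2 * m + 1)) ℝ V)
    (ξ : V) (hξ : ‖ξ‖ = 1)
    (R : V →ₗ[ℝ] V →ₗ[ℝ] V →ₗ[ℝ] V)
    (hR1 : ∀ x y z w : V, ⟪R x y z, w⟫ = - ⟪R y x z, w⟫)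
    (hR2 : ∀ x y z w : V, ⟪R x y z, w⟫ = - ⟪R x y w, z⟫)
    (hR3 : ∀ x y z w : V, ⟪R x y z, w⟫ = ⟪R z w x, y⟫)
    (hRB : ∀ x y z : V, R x y z + R y z x + R z x y = 0)
    (hK : ∀ X : V, R X ξ ξ = X - ⟪ξ, X⟫ • ξ)
    (Q : V →ₗ[ℝ] V)
    (hQ : ∀ x y : V, ⟪Q x, y⟫ = ∑ i, ⟪R (b i) x y, b i⟫)
    (hQξ : Q ξ = ((2 * m : ℝ)) • ξ)
    (r : ℝ) (hr : r = ∑ i, ⟪Q (b i), b i⟫)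
    (W : V → V → V → V)
    (hW : ∀ X Y Z : V, W X Y Z = R X Y Z
      + ((2 * (m : ℝ) - 1))⁻¹ • (⟪Q X, Z⟫ • Y - ⟪Q Y, Z⟫ • X
          + ⟪X, Z⟫ • Q Y - ⟪Y, Z⟫ • Q X)
      - (r / ((2 * (m : ℝ)) * (2 * (m : ℝ) - 1))) • (⟪X, Z⟫ • Y - ⟪Y, Z⟫ • X)) :
    (∀ X : V, W X ξ ξ = 0) ↔
      ∀ X : V, Q X = (r / (2 * (m : ℝ)) - 1) • X
        + (((2 * (m : ℝ) + 1) - r / (2 * (m : ℝ))) * ⟪ξ, X⟫) • ξ := by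
  have hm2 : (2:ℝ) ≤ (m:ℝ) := by exact_mod_cast hm
  have h2m : (2*(m:ℝ)) ≠ 0 := by nlinarith
  have h2m1 : (2*(m:ℝ) - 1) ≠ 0 := by nlinarith
  have hξξ : ⟪ξ, ξ⟫ = 1 := by
    rw [real_inner_self_eq_norm_sq, hξ]; norm_num
  have hsym : ∀ x y : V, ⟪Q x, y⟫ = ⟪Q y, x⟫ := by
    intro x y
    rw [hQ, hQ]
    refine Finset.sum_congr rfl fun i _ => ?_
    rw [hR3 (b i) x y (b i), hR1 y (b i) (b i) x, hR2 (b i) y (b i) x, neg_neg]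
  have hQXξ : ∀ X : V, ⟪Q X, ξ⟫ = 2*(m:ℝ) * ⟪ξ, X⟫ := by
    intro X; rw [hsym, hQξ, real_inner_smul_left]
  have key : ∀ X : V, W X ξ ξ = (2*(m:ℝ)-1)⁻¹ •
      (((r / (2*(m:ℝ)) - 1) • X
        + (((2*(m:ℝ)+1) - r/(2*(m:ℝ))) * ⟪ξ, X⟫) • ξ) - Q X) := by
    intro X
    rw [hW, hK, hQξ, hQXξ, real_inner_comm X ξ]
    simp only [real_inner_smul_left, hξξ]
    match_scalars <;> field_simp <;> ring
  constructor
  · intro h X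
    have h0 := (key X).symm.trans (h X)
    rcases smul_eq_zero.mp h0 with hc | he
    · exact absurd hc (inv_ne_zero h2m1)
    · exact (sub_eq_zero.mp he).symm
  · intro h X
    rw [key X, ← h X, sub_self, smul_zero]
end

section
/- Let V be a real inner product space of dimension 2m+1 ≥ 5, ξ a unit vector, η(X) = g(ξ,X), R an algebraic curvature tensor with Ricci operator Q satisfying Qξ = 2mξ and QX = (r/(2m) - 1)X + (2m + 1 - r/(2m)) η(X)ξ where r = tr Q. Let W be the associated Weyl tensor. Then W(X,Y)ξ = R(X,Y)ξ - η(Y)X + η(X)Y for all X, Y. In particular, W(X,Y)ξ = 0 for all X, Y if and only if R(X,Y)ξ = η(Y)X - η(X)Y (the Sasakian curvature condition). -/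
open RealInnerProductSpace

/-- Under the η-Einstein Ricci form, W(X,Y)ξ = R(X,Y)ξ - η(Y)X + η(X)Y; hence
W(X,Y)ξ = 0 for all X,Y iff the Sasakian curvature condition holds. -/
theorem stmt5 {V : Type*} [NormedAddCommGroup V] [InnerProductSpace ℝ V]
    [FiniteDimensional ℝ V] (m : ℕ) (hm : 2 ≤ m)
    (hdim : Module.finrank ℝ V = 2 * m + 1)
    (ξ : V) (hξ : ‖ξ‖ = 1)
    (R : V →ₗ[ℝ] V →ₗ[ℝ] V →ₗ[ℝ] V)
    (hR1 : ∀ x y z w : V, ⟪R x y z, w⟫ = - ⟪R y x z, w⟫)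
    (hR2 : ∀ x y z w : V, ⟪R x y z, w⟫ = - ⟪R x y w, z⟫)
    (hR3 : ∀ x y z w : V, ⟪R x y z, w⟫ = ⟪R z w x, y⟫)
    (hRB : ∀ x y z : V, R x y z + R y z x + R z x y = 0)
    (Q : V →ₗ[ℝ] V)
    (hQξ : Q ξ = ((2 * m : ℝ)) • ξ)
    (r : ℝ) (hr : r = LinearMap.trace ℝ V Q)
    (hQform : ∀ X : V, Q X = (r / (2 * (m : ℝ)) - 1) • X
      + (((2 * (m : ℝ) + 1) - r / (2 * (m : ℝ))) * ⟪ξ, X⟫) • ξ)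
    (W : V → V → V → V)
    (hW : ∀ X Y Z : V, W X Y Z = R X Y Z
      + ((2 * (m : ℝ) - 1))⁻¹ • (⟪Q X, Z⟫ • Y - ⟪Q Y, Z⟫ • X
          + ⟪X, Z⟫ • Q Y - ⟪Y, Z⟫ • Q X)
      - (r / ((2 * (m : ℝ)) * (2 * (m : ℝ) - 1))) • (⟪X, Z⟫ • Y - ⟪Y, Z⟫ • X)) :
    (∀ X Y : V, W X Y ξ = R X Y ξ - ⟪ξ, Y⟫ • X + ⟪ξ, X⟫ • Y) ∧
    ((∀ X Y : V, W X Y ξ = 0) ↔ ∀ X Y : V, R X Y ξ = ⟪ξ, Y⟫ • X - ⟪ξ, X⟫ • Y) := by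
  have hm' : (2 : ℝ) ≤ (m : ℝ) := by exact_mod_cast hm
  have hm0 : (2 * (m : ℝ)) ≠ 0 := by positivity
  have hm1 : (2 * (m : ℝ) - 1) ≠ 0 := by nlinarith
  have hξξ : ⟪ξ, ξ⟫ = (1 : ℝ) := by
    rw [real_inner_self_eq_norm_sq, hξ]; norm_num
  have hQX : ∀ X : V, ⟪Q X, ξ⟫ = (2 * (m : ℝ)) * ⟪ξ, X⟫ := by
    intro X
    rw [hQform X]
    simp [inner_add_left, inner_smul_left, hξξ, hξ, real_inner_comm ξ X]
    ring
  have h1 : ∀ X Y : V, W X Y ξ = R X Y ξ - ⟪ξ, Y⟫ • X + ⟪ξ, X⟫ • Y := by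
    intro X Y
    rw [hW, hQX, hQX, hQform X, hQform Y, real_inner_comm X ξ, real_inner_comm Y ξ]
    match_scalars <;> field_simp <;> ring
  refine ⟨h1, ?_, ?_⟩
  · intro h X Y
    have h2 := h X Y
    rw [h1] at h2
    linear_combination (norm := module) h2
  · intro h X Y
    rw [h1, h X Y]
    module
end

section
/- Let V be a real inner product space of dimension 2m+1 ≥ 3, ξ a unit vector with η(X) = g(ξ,X), and let R be an algebraic curvature tensor on V with Ricci operator Q satisfying Ric = a g + b η⊗η for scalars a, b, and suppose W(X,Y)ξ = 0 where W is the Weyl tensor of R. Then R(X,Y)ξ = ((a+b)/(2m))[η(Y)X - η(X)Y] for all X, Y. -/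
open RealInnerProductSpace

/-- Equation (3.10): quasi-Einstein Ricci with U = ξ plus W(X,Y)ξ = 0 forces
R(X,Y)ξ = ((a+b)/(2m))[η(Y)X - η(X)Y]. -/
theorem stmt6 {V : Type*} [NormedAddCommGroup V] [InnerProductSpace ℝ V]
    [FiniteDimensional ℝ V] (m : ℕ) (hm : 1 ≤ m)
    (hdim : Module.finrank ℝ V = 2 * m + 1)
    (ξ : V) (hξ : ‖ξ‖ = 1)
    (R : V →ₗ[ℝ] V →ₗ[ℝ] V →ₗ[ℝ] V)
    (hR1 : ∀ x y z w : V, ⟪R x y z, w⟫ = - ⟪R y x z, w⟫)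
    (hR2 : ∀ x y z w : V, ⟪R x y z, w⟫ = - ⟪R x y w, z⟫)
    (hR3 : ∀ x y z w : V, ⟪R x y z, w⟫ = ⟪R z w x, y⟫)
    (hRB : ∀ x y z : V, R x y z + R y z x + R z x y = 0)
    (Q : V →ₗ[ℝ] V) (a b : ℝ)
    (hQform : ∀ X Y : V, ⟪Q X, Y⟫ = a * ⟪X, Y⟫ + b * ⟪ξ, X⟫ * ⟪ξ, Y⟫)
    (r : ℝ) (hr : r = LinearMap.trace ℝ V Q)
    (W : V → V → V → V)
    (hW : ∀ X Y Z : V, W X Y Z = R X Y Z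
      + ((2 * (m : ℝ) - 1))⁻¹ • (⟪Q X, Z⟫ • Y - ⟪Q Y, Z⟫ • X
          + ⟪X, Z⟫ • Q Y - ⟪Y, Z⟫ • Q X)
      - (r / ((2 * (m : ℝ)) * (2 * (m : ℝ) - 1))) • (⟪X, Z⟫ • Y - ⟪Y, Z⟫ • X))
    (hWξ : ∀ X Y : V, W X Y ξ = 0) :
    ∀ X Y : V, R X Y ξ = ((a + b) / (2 * (m : ℝ))) • (⟪ξ, Y⟫ • X - ⟪ξ, X⟫ • Y) := by
  have hξξ : ⟪ξ, ξ⟫ = (1 : ℝ) := by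
    rw [real_inner_self_eq_norm_sq, hξ]; norm_num
  -- Q is explicitly a • id + b • (rank one)
  have hQ : ∀ X : V, Q X = a • X + (b * ⟪ξ, X⟫) • ξ := by
    intro X
    apply ext_inner_right ℝ
    intro v
    rw [hQform, inner_add_left, real_inner_smul_left, real_inner_smul_left]
    try ring
  -- trace of Q
  have hQeq : Q = a • (LinearMap.id : V →ₗ[ℝ] V)
      + b • (dualTensorHom ℝ V V ((innerₛₗ ℝ ξ) ⊗ₜ[ℝ] ξ)) := by
    ext X
    simp [hQ X, dualTensorHom_apply, mul_smul]
  have hrval : r = (2 * (m : ℝ) + 1) * a + b := by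
    rw [hr, hQeq]
    simp only [map_add, map_smul, LinearMap.trace_id, hdim]
    have htr : LinearMap.trace ℝ V (dualTensorHom ℝ V V ((innerₛₗ ℝ ξ) ⊗ₜ[ℝ] ξ))
        = ⟪ξ, ξ⟫ := by
      have := congrArg (fun f => f ((innerₛₗ ℝ ξ) ⊗ₜ[ℝ] ξ)) (LinearMap.trace_eq_contract ℝ V)
      simpa using this
    rw [htr, hξξ]
    push_cast
    simp only [smul_eq_mul]
    ring
  have hm' : (2 * (m : ℝ) - 1) ≠ 0 := by
    have : (1 : ℝ) ≤ (m : ℝ) := by exact_mod_cast hm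
    nlinarith
  have hm2 : (2 * (m : ℝ)) ≠ 0 := by
    have : (1 : ℝ) ≤ (m : ℝ) := by exact_mod_cast hm
    nlinarith
  intro X Y
  have h := hWξ X Y
  rw [hW] at h
  have hQXξ : ⟪Q X, ξ⟫ = (a + b) * ⟪ξ, X⟫ := by
    rw [hQform, real_inner_comm X ξ, hξξ]; ring
  have hQYξ : ⟪Q Y, ξ⟫ = (a + b) * ⟪ξ, Y⟫ := by
    rw [hQform, real_inner_comm Y ξ, hξξ]; ring
  rw [hQXξ, hQYξ, hQ X, hQ Y, hrval] at h
  have h' : R X Y ξ =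
      (((2 * (m : ℝ) + 1) * a + b) / (2 * (m : ℝ) * (2 * (m : ℝ) - 1)))
        • (⟪X, ξ⟫ • Y - ⟪Y, ξ⟫ • X)
      - (2 * (m : ℝ) - 1)⁻¹ • (((a + b) * ⟪ξ, X⟫) • Y - ((a + b) * ⟪ξ, Y⟫) • X
          + ⟪X, ξ⟫ • (a • Y + (b * ⟪ξ, Y⟫) • ξ) - ⟪Y, ξ⟫ • (a • X + (b * ⟪ξ, X⟫) • ξ)) := by
    rw [← sub_eq_zero, ← h]
    module
  rw [h', real_inner_comm X ξ, real_inner_comm Y ξ]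
  match_scalars <;> field_simp <;> ring
end

section
/- Let V be a vector space of dimension n ≥ 4 with nondegenerate symmetric bilinear form g, and W an algebraic Weyl tensor (all curvature symmetries plus total trace-freeness). Let U be a vector with g(U,U) = ε ≠ 0 and suppose W(x,y,z,U) = 0 whenever x,y,z are orthogonal to U. Then all components of W involving U are determined by its 'electric part' E(x,y) = W(x,U,U,y): specifically W(x,U,U,y) = W(y,U,U,x), E is trace-free on U^⊥, and if additionally E = 0 then W(X,Y,Z,U) = 0 for all X,Y,Z ∈ V. -/
/-- Linear-algebra lemma on algebraic Weyl tensors: if W(x,y,z,U) = 0 for all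
x,y,z ⊥ U (U non-null), then the components of W involving U are governed by the
electric part E(x,y) = W(x,U,U,y): E is symmetric, trace-free on U^⊥, and E = 0
implies W(X,Y,Z,U) = 0 for all X,Y,Z. -/
theorem stmt12 {V : Type*} [AddCommGroup V] [Module ℝ V]
    (n : ℕ) (hn : 4 ≤ n)
    (g : V →ₗ[ℝ] V →ₗ[ℝ] ℝ) (gsymm : ∀ x y : V, g x y = g y x)
    (gnondeg : ∀ x : V, (∀ y : V, g x y = 0) → x = 0)
    (W : V →ₗ[ℝ] V →ₗ[ℝ] V →ₗ[ℝ] V →ₗ[ℝ] ℝ)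
    (hanti1 : ∀ x y z w : V, W x y z w = - W y x z w)
    (hanti2 : ∀ x y z w : V, W x y z w = - W x y w z)
    (hpair : ∀ x y z w : V, W x y z w = W z w x y)
    (hbianchi : ∀ x y z w : V, W x y z w + W y z x w + W z x y w = 0)
    (htracefree : ∀ (e : Fin n → V) (εs : Fin n → ℝ),
      (∀ i, εs i = 1 ∨ εs i = -1) →
      (∀ i j, g (e i) (e j) = if i = j then εs i else 0) →
      ∀ x y : V, ∑ i, εs i * W (e i) x y (e i) = 0)
    (U : V) (ε : ℝ) (hε : ε ≠ 0) (hU : g U U = ε)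
    (hyp : ∀ x y z : V, g U x = 0 → g U y = 0 → g U z = 0 → W x y z U = 0) :
    (∀ x y : V, g U x = 0 → g U y = 0 → W x U U y = W y U U x) ∧
    (∀ (w : Fin (n - 1) → V) (δ : Fin (n - 1) → ℝ),
      (∀ i, δ i = 1 ∨ δ i = -1) →
      (∀ i, g U (w i) = 0) →
      (∀ i j, g (w i) (w j) = if i = j then δ i else 0) →
      ∑ i, δ i * W (w i) U U (w i) = 0) ∧
    ((∀ x y : V, g U x = 0 → g U y = 0 → W x U U y = 0) →
      ∀ X Y Z : V, W X Y Z U = 0) := by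
  have WUU : ∀ x z w : V, W x x z w = 0 := fun x z w => by
    have := hanti1 x x z w; linarith
  have Wlast : ∀ x y z : V, W x y z z = 0 := fun x y z => by
    have := hanti2 x y z z; linarith
  refine ⟨?_, ?_, ?_⟩
  · intro x y _ _
    have h1 := hpair x U U y
    have h2 := hanti1 U y x U
    have h3 := hanti2 y U x U
    linarith
  · intro w δ hδ horth hONB
    obtain ⟨m, rfl⟩ : ∃ m, n = m + 1 := ⟨n - 1, by omega⟩
    set c : ℝ := (Real.sqrt |ε|)⁻¹ with hc
    set ε' : ℝ := if 0 < ε then (1:ℝ) else -1 with hε'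
    have hcc : c * (c * ε) = ε' := by
      have h1 : c * c = |ε|⁻¹ := by
        rw [hc, ← mul_inv, Real.mul_self_sqrt (abs_nonneg ε)]
      have h2 : c * (c * ε) = (c * c) * ε := by ring
      rw [h2, h1, hε']
      rcases lt_trichotomy 0 ε with h | h | h
      · rw [if_pos h, abs_of_pos h]; field_simp
      · exact absurd h.symm hε
      · rw [if_neg (by linarith), abs_of_neg h]; field_simp
    set u0 : V := c • U with hu0
    have hgu0u0 : g u0 u0 = ε' := by
      rw [hu0]
      simp only [map_smul, LinearMap.smul_apply, smul_eq_mul, hU]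
      exact hcc
    have hgu0w : ∀ j : Fin m, g u0 (w j) = 0 := by
      intro j; rw [hu0]; simp [horth j]
    have hgwu0 : ∀ j : Fin m, g (w j) u0 = 0 := by
      intro j; rw [gsymm]; exact hgu0w j
    set e : Fin (m + 1) → V := Fin.cons u0 w with he
    set εs : Fin (m + 1) → ℝ := Fin.cons ε' δ with heεs
    have hεs1 : ∀ i, εs i = 1 ∨ εs i = -1 := by
      intro i
      rcases Fin.eq_zero_or_eq_succ i with rfl | ⟨k, rfl⟩
      · rw [heεs, Fin.cons_zero, hε']
        split
        · left; rfl
        · right; rfl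
      · rw [heεs, Fin.cons_succ]; exact hδ k
    have hge : ∀ i j, g (e i) (e j) = if i = j then εs i else 0 := by
      intro i j
      rcases Fin.eq_zero_or_eq_succ i with rfl | ⟨k, rfl⟩ <;>
        rcases Fin.eq_zero_or_eq_succ j with rfl | ⟨l, rfl⟩
      · simp [he, heεs, hgu0u0]
      · simp [he, heεs, hgu0w l, (Fin.succ_ne_zero l).symm, Fin.succ_ne_zero]
      · simp [he, heεs, hgwu0 k, Fin.succ_ne_zero]
      · simp only [he, heεs, Fin.cons_succ, Fin.succ_inj]
        exact hONB k l
    have htr := htracefree e εs hεs1 hge U U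
    rw [Fin.sum_univ_succ] at htr
    have h0 : εs 0 * W (e 0) U U (e 0) = 0 := by
      rw [he, heεs, Fin.cons_zero, hu0]
      simp [map_smul, smul_eq_mul, WUU U U U]
    rw [h0, zero_add] at htr
    calc ∑ i, δ i * W (w i) U U (w i)
        = ∑ i : Fin m, εs i.succ * W (e i.succ) U U (e i.succ) := by
          refine Finset.sum_congr rfl fun i _ => ?_
          rw [he, heεs, Fin.cons_succ, Fin.cons_succ]
      _ = 0 := htr
  · intro hE X Y Z
    have key : ∀ x y z : V, g U x = 0 → g U y = 0 → g U z = 0 →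
        ∀ a b c : ℝ, W (x + a • U) (y + b • U) (z + c • U) U = 0 := by
      intro x y z hx hy hz a b c
      have h1 : W x y z U = 0 := hyp x y z hx hy hz
      have h2 : W x y U U = 0 := Wlast x y U
      have h3 : W x U z U = 0 := by
        have := hanti2 x U z U
        have := hE x z hx hz
        linarith
      have h4 : W x U U U = 0 := Wlast x U U
      have h5 : W U y z U = 0 := by
        have e1 := hanti1 U y z U
        have e2 := hanti2 y U z U
        have e3 := hE y z hy hz
        linarith
      have h6 : W U y U U = 0 := Wlast U y U
      have h7 : W U U z U = 0 := WUU U z U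
      have h8 : W U U U U = 0 := WUU U U U
      simp only [map_add, map_smul, LinearMap.add_apply, LinearMap.smul_apply,
        smul_eq_mul, h1, h2, h3, h4, h5, h6, h7, h8]
      ring
    have hox : g U (X - (g U X / ε) • U) = 0 := by
      simp only [map_sub, map_smul, smul_eq_mul, hU]
      field_simp
      ring
    have hoy : g U (Y - (g U Y / ε) • U) = 0 := by
      simp only [map_sub, map_smul, smul_eq_mul, hU]
      field_simp
      ring
    have hoz : g U (Z - (g U Z / ε) • U) = 0 := by
      simp only [map_sub, map_smul, smul_eq_mul, hU]
      field_simp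
      ring
    have := key _ _ _ hox hoy hoz (g U X / ε) (g U Y / ε) (g U Z / ε)
    have eX : X - (g U X / ε) • U + (g U X / ε) • U = X := by abel
    have eY : Y - (g U Y / ε) • U + (g U Y / ε) • U = Y := by abel
    have eZ : Z - (g U Z / ε) • U + (g U Z / ε) • U = Z := by abel
    rw [eX, eY, eZ] at this
    exact this
end
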